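/- For every 2×2 unitary matrix U, every unit vector α ∈ ℂ² (‖α‖ = 1), and every a,b ∈ {0,1}, the squared norm of the contraction of α ⊗ |Φ00⟩ against |Φ(U)_{ab}⟩ equals 1/4; that is, ‖ L_{ab}(α ⊗ |Φ00⟩) ‖² = 1/4, where L_{ab} : ℂ²⊗ℂ²⊗ℂ² → ℂ² is the linear map defined on simple tensors by u⊗v⊗w ↦ ⟨Φ(U)_{ab}, u⊗v⟩ · w. (The four outcomes of a U-rotated Bell measurement are uniformly random, the core of Proposition 1.) -/

import Mathlib

open Matrix BigOperators

/-- Pauli X gate. -/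
noncomputable def Xg : Matrix (Fin 2) (Fin 2) ℂ := !![0, 1; 1, 0]

/-- Pauli Z gate. -/
noncomputable def Zg : Matrix (Fin 2) (Fin 2) ℂ := !![1, 0; 0, -1]

/-- Standard basis vector `|i⟩` of ℂ². -/
noncomputable def ket (i : Fin 2) : Fin 2 → ℂ := fun j => if j = i then 1 else 0

/-- Tensor product of two vectors of ℂ². -/
noncomputable def tens (u v : Fin 2 → ℂ) : Fin 2 × Fin 2 → ℂ := fun p => u p.1 * v p.2

/-- The EPR state `|Φ00⟩ = (1/√2)(|0⟩⊗|0⟩ + |1⟩⊗|1⟩)`. -/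
noncomputable def Phi00 : Fin 2 × Fin 2 → ℂ :=
  ((Real.sqrt 2 : ℂ))⁻¹ • (tens (ket 0) (ket 0) + tens (ket 1) (ket 1))

/-- The Bell state `|Φ_{ab}⟩ = (Z^b X^a ⊗ I)|Φ00⟩`. -/
noncomputable def PhiBell (a b : Fin 2) : Fin 2 × Fin 2 → ℂ :=
  (kroneckerMap (· * ·) (Zg ^ (b : ℕ) * Xg ^ (a : ℕ))
    (1 : Matrix (Fin 2) (Fin 2) ℂ)).mulVec Phi00

/-- The `U`-rotated Bell state `|Φ(U)_{ab}⟩ = (U† ⊗ I)|Φ_{ab}⟩`. -/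
noncomputable def PhiU (U : Matrix (Fin 2) (Fin 2) ℂ) (a b : Fin 2) : Fin 2 × Fin 2 → ℂ :=
  (kroneckerMap (· * ·) Uᴴ (1 : Matrix (Fin 2) (Fin 2) ℂ)).mulVec (PhiBell a b)

/-- The linear map ℂ²⊗ℂ²⊗ℂ² → ℂ² contracting the first two tensor factors
against a vector `φ ∈ ℂ²⊗ℂ²`; on simple tensors, `u⊗v⊗w ↦ ⟨φ, u⊗v⟩ · w`
(inner product conjugate-linear in the first argument). -/
noncomputable def contractFirstTwo (φ : Fin 2 × Fin 2 → ℂ)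
    (ψ : Fin 2 × Fin 2 × Fin 2 → ℂ) : Fin 2 → ℂ :=
  fun k => ∑ p : Fin 2 × Fin 2, (starRingEnd ℂ) (φ p) * ψ (p.1, p.2, k)


lemma conj_mul_self' (z : ℂ) : (starRingEnd ℂ) z * z = ((‖z‖^2 : ℝ) : ℂ) := by
  rw [mul_comm, Complex.mul_conj, Complex.normSq_eq_norm_sq]


/-- Each of the four outcomes of a `U`-rotated Bell measurement on
`α ⊗ |Φ00⟩` (with `‖α‖ = 1`) occurs with probability 1/4: the squared norm of
the contraction against `|Φ(U)_{ab}⟩` equals 1/4. -/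
theorem rotated_bell_uniform_outcomes (U : Matrix (Fin 2) (Fin 2) ℂ)
    (hU : U ∈ Matrix.unitaryGroup (Fin 2) ℂ) (α : Fin 2 → ℂ)
    (hα : ∑ i : Fin 2, ‖α i‖ ^ 2 = 1) (a b : Fin 2) :
    ∑ k : Fin 2,
        ‖contractFirstTwo (PhiU U a b)
            (fun p : Fin 2 × Fin 2 × Fin 2 => α p.1 * Phi00 p.2) k‖ ^ 2
      = 1 / 4 := by
  have hUU : Uᴴ * U = 1 := hU.1
  have e := fun i j => congrFun (congrFun hUU i) j
  simp only [Matrix.mul_apply, Matrix.conjTranspose_apply, Fin.sum_univ_two,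
    Matrix.one_apply, RCLike.star_def] at e
  have e00 := e 0 0
  have e01 := e 0 1
  have e10 := e 1 0
  have e11 := e 1 1
  norm_num at e00 e01 e10 e11
  have hαc : (starRingEnd ℂ) (α 0) * α 0 + (starRingEnd ℂ) (α 1) * α 1 = 1 := by
    rw [conj_mul_self', conj_mul_self']
    rw [Fin.sum_univ_two] at hα
    norm_cast
  set z0 : ℂ := U 0 0 * α 0 + U 0 1 * α 1 with hz0
  set z1 : ℂ := U 1 0 * α 0 + U 1 1 * α 1 with hz1
  have hz : (starRingEnd ℂ) z0 * z0 + (starRingEnd ℂ) z1 * z1 = 1 := by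
    simp only [hz0, hz1, map_add, _root_.map_mul]
    linear_combination (starRingEnd ℂ) (α 0) * α 0 * e00 + (starRingEnd ℂ) (α 0) * α 1 * e01 +
      (starRingEnd ℂ) (α 1) * α 0 * e10 + (starRingEnd ℂ) (α 1) * α 1 * e11 + hαc
  have hv : ‖z0‖^2 + ‖z1‖^2 = 1 := by
    have := hz
    rw [conj_mul_self', conj_mul_self'] at this
    exact_mod_cast this
  have hs : ((Real.sqrt 2 : ℝ) : ℂ)⁻¹ * ((Real.sqrt 2 : ℝ) : ℂ)⁻¹ = 1/2 := by
    rw [← mul_inv]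
    norm_cast
    rw [Real.mul_self_sqrt (by norm_num)]
    norm_num
  have habs : ∀ z : ℂ, ‖(1/2 : ℂ) * z‖ ^ 2 = 1/4 * ‖z‖ ^ 2 := by
    intro z
    rw [norm_mul, mul_pow]
    norm_num
  have hvv : ‖z0‖ ^ 2 + ‖z1‖ ^ 2 = 1 := by
    simpa using hv
  have E0 : U 0 0 * ((Real.sqrt 2 : ℝ) : ℂ)⁻¹ * (α 0 * ((Real.sqrt 2 : ℝ) : ℂ)⁻¹) +
      U 0 1 * ((Real.sqrt 2 : ℝ) : ℂ)⁻¹ * (α 1 * ((Real.sqrt 2 : ℝ) : ℂ)⁻¹) = (1/2 : ℂ) * z0 := by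
    rw [hz0]; linear_combination (U 0 0 * α 0 + U 0 1 * α 1) * hs
  have E1 : U 1 0 * ((Real.sqrt 2 : ℝ) : ℂ)⁻¹ * (α 0 * ((Real.sqrt 2 : ℝ) : ℂ)⁻¹) +
      U 1 1 * ((Real.sqrt 2 : ℝ) : ℂ)⁻¹ * (α 1 * ((Real.sqrt 2 : ℝ) : ℂ)⁻¹) = (1/2 : ℂ) * z1 := by
    rw [hz1]; linear_combination (U 1 0 * α 0 + U 1 1 * α 1) * hs
  have E1n : -(U 1 0 * ((Real.sqrt 2 : ℝ) : ℂ)⁻¹ * (α 0 * ((Real.sqrt 2 : ℝ) : ℂ)⁻¹)) +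
      -(U 1 1 * ((Real.sqrt 2 : ℝ) : ℂ)⁻¹ * (α 1 * ((Real.sqrt 2 : ℝ) : ℂ)⁻¹)) = (1/2 : ℂ) * (-z1) := by
    rw [hz1]; linear_combination (-(U 1 0 * α 0 + U 1 1 * α 1)) * hs
  fin_cases a <;> fin_cases b <;>
  · simp [contractFirstTwo, PhiU, PhiBell, Phi00, tens, ket, Xg, Zg, Matrix.mulVec,
      Matrix.kroneckerMap, dotProduct, Fintype.sum_prod_type, Fin.sum_univ_two,
      Matrix.one_apply, Prod.ext_iff]
    rw [E0]
    first
      | rw [E1]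
      | rw [E1n]
    rw [habs, habs]
    try simp only [norm_neg]
    linarith [hvv]
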